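/- Prod corollary, constant regret against the anchor expert with tuned learning rate: Under the Prod setup (experts 0,…,K; losses ℓ_t : {0,…,K} → [−M,M] with M ≥ 1; q^0_1 = 1−η, q^i_1 = η/K; p^j_t = q^j_t / ∑_{j'} q^{j'}_t; q^i_{t+1} = q^i_t(1 + η(ℓ_t(0) − ℓ_t(i)))), set η = (1/(2M))√(ln(KMT)/T) and assume T is large enough that η ≤ 1/(4M). Then ∑_{t=1}^T ∑_{j=0}^K p^j_t ℓ_t(j) ≤ ∑_{t=1}^T ℓ_t(0) + 2. -/

import Mathlib

/-- Prod corollary, constant regret against the anchor expert with tuned learning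
rate `η = (1/(2M))√(ln(KMT)/T)` (assumed `≤ 1/(4M)`), `M ≥ 1`:
`∑_t ∑_j p^j_t ℓ_t(j) ≤ ∑_t ℓ_t(0) + 2`. -/
theorem prod_tuned_regret_anchor
    (K T : ℕ) (hK : 0 < K) (hT : 0 < T)
    (M : ℝ) (hM : 1 ≤ M)
    (ℓ : ℕ → Fin (K + 1) → ℝ)
    (hℓ : ∀ t ∈ Finset.Icc 1 T, ∀ j, |ℓ t j| ≤ M)
    (η : ℝ) (hηdef : η = (1 / (2 * M)) * Real.sqrt (Real.log (K * M * T) / T))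
    (hη : η ≤ 1 / (4 * M))
    (q : ℕ → Fin (K + 1) → ℝ)
    (hq0 : q 1 0 = 1 - η)
    (hq1 : ∀ i : Fin (K + 1), i ≠ 0 → q 1 i = η / K)
    (hqrec : ∀ t, 1 ≤ t → ∀ i : Fin (K + 1),
      q (t + 1) i = q t i * (1 + η * (ℓ t 0 - ℓ t i)))
    (p : ℕ → Fin (K + 1) → ℝ)
    (hp : ∀ t i, p t i = q t i / ∑ j, q t j)
    :
    ∑ t ∈ Finset.Icc 1 T, ∑ j : Fin (K + 1), p t j * ℓ t j ≤
      ∑ t ∈ Finset.Icc 1 T, ℓ t 0 + 2 := by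
  have hM0 : (0:ℝ) < M := lt_of_lt_of_le one_pos hM
  have hη0 : 0 ≤ η := by
    rw [hηdef]
    exact mul_nonneg (by positivity) (Real.sqrt_nonneg _)
  have hη4 : η ≤ 1/4 := by
    refine hη.trans ?_
    rw [div_le_div_iff₀ (by positivity) (by norm_num)]
    nlinarith
  rcases eq_or_lt_of_le hη0 with hz | hpos
  · -- degenerate case η = 0 : all mass stays on the anchor
    have hz' : η = 0 := hz.symm
    have hq : ∀ n : ℕ, q (n+1) 0 = 1 ∧ ∀ i : Fin (K+1), i ≠ 0 → q (n+1) i = 0 := by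
      intro n
      induction n with
      | zero =>
        refine ⟨by rw [hq0, hz']; ring, fun i hi => by rw [hq1 i hi, hz', zero_div]⟩
      | succ n ih =>
        refine ⟨?_, fun i hi => ?_⟩
        · rw [hqrec (n+1) (Nat.le_add_left 1 n) 0, ih.1, hz']; ring
        · rw [hqrec (n+1) (Nat.le_add_left 1 n) i, ih.2 i hi]; ring
    have key : ∀ t ∈ Finset.Icc 1 T, ∑ j : Fin (K+1), p t j * ℓ t j = ℓ t 0 := by
      intro t ht
      obtain ⟨ht1, _⟩ := Finset.mem_Icc.mp ht
      obtain ⟨n, rfl⟩ := Nat.exists_eq_add_of_le' ht1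
      have hzero : ∀ i : Fin K, q (n+1) i.succ = 0 :=
        fun i => (hq n).2 i.succ (Fin.succ_ne_zero i)
      have hW : ∑ j : Fin (K+1), q (n+1) j = 1 := by
        rw [Fin.sum_univ_succ, (hq n).1]
        simp [hzero]
      rw [Fin.sum_univ_succ]
      have hp0 : p (n+1) 0 = 1 := by rw [hp, hW, (hq n).1, div_one]
      have hps : ∀ i : Fin K, p (n+1) i.succ = 0 := by
        intro i; rw [hp, hW, hzero i, zero_div]
      simp [hp0, hps]
    have : ∑ t ∈ Finset.Icc 1 T, ∑ j : Fin (K+1), p t j * ℓ t j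
        = ∑ t ∈ Finset.Icc 1 T, ℓ t 0 := Finset.sum_congr rfl key
    rw [this]; linarith
  · -- main case η > 0
    have hη2M : 2 * M * η ≤ 1/2 := by
      rw [le_div_iff₀ (by positivity)] at hη
      nlinarith
    -- main induction: nonneg weights, anchor weight, product formula for total weight
    have main : ∀ n : ℕ, n ≤ T →
        (∀ i, 0 ≤ q (n+1) i) ∧ q (n+1) 0 = 1 - η ∧
        (∑ j : Fin (K+1), q (n+1) j)
          = ∏ s ∈ Finset.Icc 1 n, (1 + η * (ℓ s 0 - ∑ j : Fin (K+1), p s j * ℓ s j)) := by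
      intro n
      induction n with
      | zero =>
        intro _
        refine ⟨?_, hq0, ?_⟩
        · intro i
          rcases eq_or_ne i 0 with rfl | hi
          · rw [hq0]; linarith
          · rw [hq1 i hi]; positivity
        · rw [Finset.Icc_eq_empty (by norm_num), Finset.prod_empty,
            Fin.sum_univ_succ, hq0]
          have h1 : ∀ i : Fin K, q 1 i.succ = η / K :=
            fun i => hq1 i.succ (Fin.succ_ne_zero i)
          simp only [h1, Finset.sum_const, Finset.card_univ, Fintype.card_fin, nsmul_eq_mul]
          have hK' : (K:ℝ) ≠ 0 := Nat.cast_ne_zero.mpr hK.ne'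
          field_simp; ring
      | succ n ih =>
        intro hn1
        obtain ⟨hposq, hanchor, hWprod⟩ := ih (Nat.le_of_succ_le hn1)
        have ht : n + 1 ∈ Finset.Icc 1 T := Finset.mem_Icc.mpr ⟨Nat.le_add_left 1 n, hn1⟩
        have hb : ∀ i, |ℓ (n+1) i| ≤ M := hℓ _ ht
        have hfac : ∀ i : Fin (K+1), (0:ℝ) ≤ 1 + η * (ℓ (n+1) 0 - ℓ (n+1) i) := by
          intro i
          have h0 := abs_le.mp (hb 0)
          have hi := abs_le.mp (hb i)
          nlinarith [mul_nonneg hη0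
            (show (0:ℝ) ≤ ℓ (n+1) 0 - ℓ (n+1) i + 2*M by linarith), hη2M]
        have hWge : 1 - η ≤ ∑ j : Fin (K+1), q (n+1) j :=
          hanchor ▸ Finset.single_le_sum (fun j _ => hposq j) (Finset.mem_univ 0)
        have hWpos : 0 < ∑ j : Fin (K+1), q (n+1) j := by linarith
        refine ⟨?_, ?_, ?_⟩
        · intro i
          rw [hqrec (n+1) (Nat.le_add_left 1 n) i]
          exact mul_nonneg (hposq i) (hfac i)
        · rw [hqrec (n+1) (Nat.le_add_left 1 n) 0, hanchor]; ring
        · have e1 : ∀ j : Fin (K+1),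
              q (n+1) j * (1 + η * (ℓ (n+1) 0 - ℓ (n+1) j))
              = (q (n+1) j + η * ℓ (n+1) 0 * q (n+1) j) - η * (q (n+1) j * ℓ (n+1) j) :=
            fun j => by ring
          have hWsum : ∑ j : Fin (K+1), q (n+1+1) j
              = (∑ j : Fin (K+1), q (n+1) j)
                * (1 + η * (ℓ (n+1) 0 - ∑ j : Fin (K+1), p (n+1) j * ℓ (n+1) j)) := by
            simp only [hqrec (n+1) (Nat.le_add_left 1 n), e1, hp]
            rw [Finset.sum_sub_distrib, Finset.sum_add_distrib, ← Finset.mul_sum,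
              ← Finset.mul_sum]
            have hS : ∑ j : Fin (K+1), q (n+1) j / (∑ j' : Fin (K+1), q (n+1) j') * ℓ (n+1) j
                = (∑ j : Fin (K+1), q (n+1) j * ℓ (n+1) j) / ∑ j' : Fin (K+1), q (n+1) j' := by
              rw [Finset.sum_div]
              exact Finset.sum_congr rfl (fun j _ => by ring)
            rw [hS]
            field_simp
            ring
          rw [hWsum, hWprod, ← Finset.prod_Icc_succ_top (Nat.le_add_left 1 n)]
    -- consequences of the induction
    obtain ⟨hposT, hanchorT, hWT⟩ := main T le_rfl
    have hWgeT : 1 - η ≤ ∑ j : Fin (K+1), q (T+1) j :=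
      hanchorT ▸ Finset.single_le_sum (fun j _ => hposT j) (Finset.mem_univ 0)
    have hprodge : 1 - η ≤ ∏ t ∈ Finset.Icc 1 T,
        (1 + η * (ℓ t 0 - ∑ j : Fin (K+1), p t j * ℓ t j)) := hWT ▸ hWgeT
    -- per-round facts
    have hPt : ∀ t ∈ Finset.Icc 1 T,
        |∑ j : Fin (K+1), p t j * ℓ t j| ≤ M ∧
        (0:ℝ) ≤ 1 + η * (ℓ t 0 - ∑ j : Fin (K+1), p t j * ℓ t j) := by
      intro t ht
      obtain ⟨ht1, ht2⟩ := Finset.mem_Icc.mp ht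
      obtain ⟨n, rfl⟩ := Nat.exists_eq_add_of_le' ht1
      obtain ⟨hposq, hanchor, _⟩ := main n (by omega)
      have hWge : 1 - η ≤ ∑ j : Fin (K+1), q (n+1) j :=
        hanchor ▸ Finset.single_le_sum (fun j _ => hposq j) (Finset.mem_univ 0)
      have hWpos : 0 < ∑ j : Fin (K+1), q (n+1) j := by linarith
      have hb := hℓ _ ht
      have habs : |∑ j : Fin (K+1), p (n+1) j * ℓ (n+1) j| ≤ M := by
        calc |∑ j : Fin (K+1), p (n+1) j * ℓ (n+1) j|
            ≤ ∑ j : Fin (K+1), |p (n+1) j * ℓ (n+1) j| := Finset.abs_sum_le_sum_abs _ _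
          _ ≤ ∑ j : Fin (K+1), p (n+1) j * M := by
              apply Finset.sum_le_sum
              intro j _
              have hpj : 0 ≤ p (n+1) j := by
                rw [hp]; exact div_nonneg (hposq j) hWpos.le
              rw [abs_mul, abs_of_nonneg hpj]
              exact mul_le_mul_of_nonneg_left (hb j) hpj
          _ = M := by
              rw [← Finset.sum_mul]
              have hone : ∑ j : Fin (K+1), p (n+1) j = 1 := by
                simp only [hp]
                rw [← Finset.sum_div, div_self hWpos.ne']
              rw [hone, one_mul]
      refine ⟨habs, ?_⟩
      have h0 := abs_le.mp (hb 0)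
      have hS := abs_le.mp habs
      nlinarith [mul_nonneg hη0
        (show (0:ℝ) ≤ ℓ (n+1) 0 - (∑ j : Fin (K+1), p (n+1) j * ℓ (n+1) j) + 2*M by
          linarith), hη2M]
    -- product ≤ exp of sum
    have hchain : ∏ t ∈ Finset.Icc 1 T,
        (1 + η * (ℓ t 0 - ∑ j : Fin (K+1), p t j * ℓ t j))
        ≤ Real.exp (η * ∑ t ∈ Finset.Icc 1 T,
            (ℓ t 0 - ∑ j : Fin (K+1), p t j * ℓ t j)) := by
      rw [Finset.mul_sum, Real.exp_sum]
      apply Finset.prod_le_prod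
      · intro t ht; exact (hPt t ht).2
      · intro t ht
        have := Real.add_one_le_exp (η * (ℓ t 0 - ∑ j : Fin (K+1), p t j * ℓ t j))
        linarith
    have h1η : (0:ℝ) < 1 - η := by linarith
    have h1 : 1 - η ≤ Real.exp (η * ∑ t ∈ Finset.Icc 1 T,
        (ℓ t 0 - ∑ j : Fin (K+1), p t j * ℓ t j)) := le_trans hprodge hchain
    have h2 : Real.log (1 - η) ≤ η * ∑ t ∈ Finset.Icc 1 T,
        (ℓ t 0 - ∑ j : Fin (K+1), p t j * ℓ t j) := by
      calc Real.log (1 - η) ≤ Real.log (Real.exp (η * ∑ t ∈ Finset.Icc 1 T,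
            (ℓ t 0 - ∑ j : Fin (K+1), p t j * ℓ t j))) := Real.log_le_log h1η h1
        _ = _ := Real.log_exp _
    have h3 : -(2*η) ≤ Real.log (1 - η) := by
      have hlog := Real.log_le_sub_one_of_pos (inv_pos.mpr h1η)
      rw [Real.log_inv] at hlog
      have hid : (1 - η)⁻¹ - 1 = η / (1 - η) := by field_simp; ring
      have hfrac : η / (1 - η) ≤ 2 * η := by
        rw [div_le_iff₀ h1η]
        nlinarith
      linarith [hlog, hid ▸ hlog]
    have hS2 : (-2 : ℝ) ≤ ∑ t ∈ Finset.Icc 1 T,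
        (ℓ t 0 - ∑ j : Fin (K+1), p t j * ℓ t j) := by
      nlinarith [le_trans h3 h2, hpos]
    rw [Finset.sum_sub_distrib] at hS2
    linarith
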